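/- For ω ∈ ℝ and k ∈ ℕ, define a_k(ω) := (1/π) ∫_{0}^{π} exp(i ω cos θ) cos(k θ) dθ ∈ ℂ. Then for every x ∈ [-1, 1], the series a_0(ω) + 2 ∑_{k=1}^{∞} a_k(ω) · T_k(x) converges and its sum equals exp(i ω x), where T_k is the k-th Chebyshev polynomial of the first kind evaluated at x. -/

import Mathlib

open Complex Real intervalIntegral MeasureTheory Set Filter Finset

noncomputable def JAf (ω : ℝ) : ℝ → ℂ := fun t => Complex.exp (Complex.I * ω * Real.cos t)
noncomputable def JAf1 (ω : ℝ) : ℝ → ℂ := fun t => Complex.I * ω * (-(Real.sin t : ℂ)) * JAf ω t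
noncomputable def JAf2 (ω : ℝ) : ℝ → ℂ := fun t =>
  Complex.I * ω * (-(Real.cos t : ℂ)) * JAf ω t + Complex.I * ω * (-(Real.sin t : ℂ)) * JAf1 ω t

lemma JAf_deriv (ω : ℝ) (t : ℝ) : HasDerivAt (JAf ω) (JAf1 ω t) t := by
  have h1 : HasDerivAt (fun t : ℝ => ((Real.cos t : ℂ))) (-(Real.sin t : ℂ)) t := by
    exact_mod_cast (Real.hasDerivAt_cos t).ofReal_comp
  have h2 := (h1.const_mul (Complex.I * (ω : ℂ))).cexp
  simp only [JAf, JAf1]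
  convert h2 using 1
  · rfl
  · ring

lemma JAf1_deriv (ω : ℝ) (t : ℝ) : HasDerivAt (JAf1 ω) (JAf2 ω t) t := by
  have h1 : HasDerivAt (fun t : ℝ => ((Real.sin t : ℂ))) ((Real.cos t : ℂ)) t := by
    exact_mod_cast (Real.hasDerivAt_sin t).ofReal_comp
  have h2 : HasDerivAt (fun t : ℝ => Complex.I * (ω : ℂ) * (-(Real.sin t : ℂ)))
      (Complex.I * (ω : ℂ) * (-(Real.cos t : ℂ))) t := h1.neg.const_mul _
  exact h2.mul (JAf_deriv ω t)

lemma JAf_cont (ω : ℝ) : Continuous (JAf ω) := by unfold JAf; fun_prop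
lemma JAf1_cont (ω : ℝ) : Continuous (JAf1 ω) := by unfold JAf1 JAf; fun_prop
lemma JAf2_cont (ω : ℝ) : Continuous (JAf2 ω) := by unfold JAf2 JAf1 JAf; fun_prop

lemma JAf_norm (ω t : ℝ) : ‖JAf ω t‖ = 1 := by
  simp only [JAf]
  rw [show Complex.I * ω * (Real.cos t : ℂ) = ((ω * Real.cos t : ℝ) : ℂ) * Complex.I by push_cast; ring,
    Complex.norm_exp_ofReal_mul_I]

lemma JAf1_norm (ω t : ℝ) : ‖JAf1 ω t‖ ≤ |ω| := by
  unfold JAf1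
  rw [norm_mul, JAf_norm, mul_one, norm_mul, norm_mul, Complex.norm_I, one_mul, norm_neg,
    Complex.norm_real, Complex.norm_real]
  calc |ω| * ‖Real.sin t‖ ≤ |ω| * 1 := by
        exact mul_le_mul_of_nonneg_left (abs_sin_le_one t) (abs_nonneg ω)
    _ = |ω| := mul_one _

lemma JAf2_norm (ω t : ℝ) : ‖JAf2 ω t‖ ≤ |ω| + ω^2 := by
  have h1 : ‖Complex.I * (ω:ℂ) * (-(Real.cos t : ℂ)) * JAf ω t‖ ≤ |ω| := by
    rw [norm_mul, JAf_norm, mul_one, norm_mul, norm_mul, Complex.norm_I, one_mul, norm_neg,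
      Complex.norm_real, Complex.norm_real]
    calc |ω| * ‖Real.cos t‖ ≤ |ω| * 1 :=
          mul_le_mul_of_nonneg_left (abs_cos_le_one t) (abs_nonneg ω)
      _ = |ω| := mul_one _
  have h2 : ‖Complex.I * (ω:ℂ) * (-(Real.sin t : ℂ)) * JAf1 ω t‖ ≤ ω^2 := by
    rw [norm_mul, norm_mul, norm_mul, Complex.norm_I, one_mul, norm_neg,
      Complex.norm_real, Complex.norm_real]
    have := JAf1_norm ω t
    have h3 : ‖Real.sin t‖ ≤ 1 := abs_sin_le_one t
    have h4 : (0:ℝ) ≤ |ω| := abs_nonneg ω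
    have h5 : (0:ℝ) ≤ ‖Real.sin t‖ := norm_nonneg _
    have h6 : (0:ℝ) ≤ ‖JAf1 ω t‖ := norm_nonneg _
    calc |ω| * ‖Real.sin t‖ * ‖JAf1 ω t‖ ≤ |ω| * 1 * |ω| := by
          apply mul_le_mul (mul_le_mul_of_nonneg_left h3 h4) this h6 (by positivity)
      _ = ω^2 := by rw [mul_one, ← abs_mul, ← sq, abs_sq]
  calc ‖JAf2 ω t‖ ≤ _ + _ := norm_add_le _ _
    _ ≤ |ω| + ω^2 := add_le_add h1 h2


lemma jab_hab : -Real.pi < -Real.pi + 2 * Real.pi := by linarith [Real.pi_pos]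

lemma fourier_pt_norm {T : ℝ} (m : ℤ) (x : AddCircle T) : ‖fourier m x‖ = 1 := by
  rw [fourier_apply, Circle.norm_coe]

/-- generic: coefficient of g in terms of coefficient of g' -/
lemma coefOn_deriv (g g' : ℝ → ℂ) (hd : ∀ t, HasDerivAt g (g' t) t) (hc : Continuous g')
    (hper : g (-Real.pi + 2 * Real.pi) = g (-Real.pi)) {n : ℤ} (hn : n ≠ 0) :
    fourierCoeffOn jab_hab g n = 1 / (Complex.I * n) * fourierCoeffOn jab_hab g' n := by
  rw [fourierCoeffOn_of_hasDerivAt jab_hab hn (fun x _ => hd x)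
    (hc.intervalIntegrable _ _)]
  rw [hper, sub_self, mul_zero, zero_sub]
  have hπ : (Real.pi : ℂ) ≠ 0 := Complex.ofReal_ne_zero.mpr Real.pi_ne_zero
  have hn' : (n : ℂ) ≠ 0 := Int.cast_ne_zero.mpr hn
  have hI : Complex.I ≠ 0 := Complex.I_ne_zero
  push_cast
  field_simp
  ring

lemma coefOn_bound (g : ℝ → ℂ) (M : ℝ) (hM : ∀ t, ‖g t‖ ≤ M) (n : ℤ) :
    ‖fourierCoeffOn jab_hab g n‖ ≤ M := by
  have hM0 : 0 ≤ M := le_trans (norm_nonneg _) (hM 0)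
  rw [fourierCoeffOn_eq_integral]
  rw [norm_smul]
  have hbound : ‖∫ x in (-Real.pi)..(-Real.pi + 2*Real.pi),
      fourier (-n) (x : AddCircle (-Real.pi + 2*Real.pi - -Real.pi)) • g x‖
      ≤ M * |(-Real.pi + 2*Real.pi) - (-Real.pi)| := by
    apply intervalIntegral.norm_integral_le_of_norm_le_const
    intro x _
    rw [norm_smul, fourier_pt_norm, one_mul]
    exact hM x
  calc ‖(1 / (-Real.pi + 2*Real.pi - -Real.pi))‖ * ‖_‖
      ≤ ‖(1 / (-Real.pi + 2*Real.pi - -Real.pi))‖ * (M * |(-Real.pi + 2*Real.pi) - (-Real.pi)|) := by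
        exact mul_le_mul_of_nonneg_left hbound (norm_nonneg _)
    _ = M := by
        have hden : (0:ℝ) < -Real.pi + 2*Real.pi - -Real.pi := by linarith [Real.pi_pos]
        rw [Real.norm_eq_abs, abs_of_pos (one_div_pos.mpr hden),
          abs_of_pos (by linarith : (0:ℝ) < (-Real.pi + 2*Real.pi) - (-Real.pi))]
        field_simp

lemma exp_I_add_neg (z : ℂ) :
    Complex.exp (Complex.I * z) + Complex.exp (-(Complex.I * z)) = 2 * Complex.cos z := by
  rw [show Complex.I * z = z * Complex.I by ring, show -(z * Complex.I) = -z * Complex.I by ring,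
    Complex.exp_mul_I, Complex.exp_mul_I, Complex.cos_neg, Complex.sin_neg]
  ring

lemma coef_eq (ω : ℝ) (n : ℤ) :
    fourierCoeffOn jab_hab (JAf ω) n
      = (1 / (Real.pi : ℂ)) *
        ∫ θ in (0:ℝ)..Real.pi, JAf ω θ * ((Real.cos ((n.natAbs : ℝ) * θ) : ℝ) : ℂ) := by
  have hπ : Real.pi ≠ 0 := Real.pi_ne_zero
  rw [fourierCoeffOn_eq_integral]
  rw [intervalIntegral.integral_congr
    (g := fun x : ℝ => Complex.exp (-(Complex.I * n * x)) * JAf ω x) (fun x _ => by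
      rw [smul_eq_mul, fourier_coe_apply]
      congr 2
      push_cast
      rw [show (-(Real.pi:ℂ) + 2*Real.pi - -Real.pi) = 2*(Real.pi:ℂ) from by ring]
      rw [div_eq_iff (mul_ne_zero two_ne_zero (Complex.ofReal_ne_zero.mpr hπ))]
      ring)]
  rw [show -Real.pi + 2 * Real.pi = Real.pi from by ring]
  -- split integral
  have hcont : Continuous fun x : ℝ => Complex.exp (-(Complex.I * n * x)) * JAf ω x := by
    unfold JAf; fun_prop
  rw [← intervalIntegral.integral_add_adjacent_intervals
    (hcont.intervalIntegrable (-Real.pi) 0) (hcont.intervalIntegrable 0 Real.pi)]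
  -- reflect the left piece
  have hrefl := intervalIntegral.integral_comp_neg (a := (0:ℝ)) (b := Real.pi)
    (fun x : ℝ => Complex.exp (-(Complex.I * n * x)) * JAf ω x)
  simp only [neg_zero] at hrefl
  rw [← hrefl]
  have hcont2 : Continuous fun x : ℝ => Complex.exp (-(Complex.I * n * ((-x : ℝ) : ℂ))) * JAf ω (-x) := by
    unfold JAf; fun_prop
  rw [← intervalIntegral.integral_add (hcont2.intervalIntegrable 0 Real.pi)
    (hcont.intervalIntegrable 0 Real.pi)]
  have hker : ∀ x ∈ Set.uIcc (0:ℝ) Real.pi,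
      Complex.exp (-(Complex.I * n * (-x:ℝ))) * JAf ω (-x)
        + Complex.exp (-(Complex.I * n * x)) * JAf ω x
      = 2 * (JAf ω x * ((Real.cos ((n.natAbs : ℝ) * x) : ℝ) : ℂ)) := by
    intro x hx
    have hx0 : 0 ≤ x := by
      rcases Set.mem_uIcc.mp hx with h | h
      · exact h.1
      · linarith [h.1, Real.pi_pos]
    have hJ : JAf ω (-x) = JAf ω x := by simp [JAf, Real.cos_neg]
    have hcos : Complex.cos ((n:ℂ) * x) = ((Real.cos ((n.natAbs : ℝ) * x) : ℝ) : ℂ) := by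
      have h0 : ((n:ℂ) * x) = (((n : ℝ) * x : ℝ) : ℂ) := by push_cast; ring
      rw [h0, ← Complex.ofReal_cos]
      congr 1
      rw [show ((n.natAbs : ℝ)) = |(n : ℝ)| from by rw [Nat.cast_natAbs, Int.cast_abs]]
      conv_rhs => rw [← abs_of_nonneg hx0 (a := x)]
      rw [← abs_mul, Real.cos_abs]
    rw [hJ, Complex.ofReal_neg,
      show -(Complex.I * (n:ℂ) * -(x:ℂ)) = Complex.I * ((n:ℂ) * x) from by ring,
      show -(Complex.I * (n:ℂ) * (x:ℂ)) = -(Complex.I * ((n:ℂ) * x)) from by ring,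
      ← add_mul, exp_I_add_neg, hcos]
    ring
  rw [intervalIntegral.integral_congr hker]
  rw [intervalIntegral.integral_const_mul, Complex.real_smul]
  have h2π : ((Real.pi : ℂ)) ≠ 0 := Complex.ofReal_ne_zero.mpr hπ
  rw [show (1 / (Real.pi - -Real.pi) : ℝ) = 1 / (2 * Real.pi) from by rw [sub_neg_eq_add]; ring_nf]
  push_cast
  field_simp

lemma JAf_per (ω : ℝ) : JAf ω (-Real.pi + 2 * Real.pi) = JAf ω (-Real.pi) := by
  rw [show -Real.pi + 2 * Real.pi = Real.pi by ring]
  simp [JAf, Real.cos_neg]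

lemma JAf1_per (ω : ℝ) : JAf1 ω (-Real.pi + 2 * Real.pi) = JAf1 ω (-Real.pi) := by
  rw [show -Real.pi + 2 * Real.pi = Real.pi by ring]
  simp [JAf1, Real.sin_neg, Real.sin_pi]

/-- Jacobi–Anger / Chebyshev expansion of `e^{iωx}` on `[-1,1]`: with
`a_k(ω) = (1/π) ∫₀^π e^{iω cos θ} cos(kθ) dθ`, for every `x ∈ [-1,1]` the series
`a_0 + 2 ∑_{k≥1} a_k T_k(x)` converges to `e^{iωx}`. -/
theorem stmt_4 (ω : ℝ) (a : ℕ → ℂ)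
    (ha : ∀ k : ℕ, a k = (1 / (Real.pi : ℂ)) *
      ∫ θ in (0 : ℝ)..Real.pi,
        Complex.exp (Complex.I * (ω : ℂ) * (Real.cos θ : ℂ)) * (Real.cos (k * θ) : ℂ)) :
    ∀ x ∈ Set.Icc (-1 : ℝ) 1,
      Filter.Tendsto
        (fun m : ℕ => a 0 + 2 * ∑ k ∈ Finset.Icc 1 m,
          a k * (((Polynomial.Chebyshev.T ℝ (k : ℤ)).eval x : ℝ) : ℂ))
        Filter.atTop (nhds (Complex.exp (Complex.I * (ω : ℂ) * (x : ℂ)))) := by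
  intro x hx
  haveI : Fact (0 < 2 * Real.pi) := ⟨Real.two_pi_pos⟩
  -- the continuous periodic function on the circle
  set F : C(AddCircle (2 * Real.pi), ℂ) :=
    ⟨AddCircle.liftIco (2 * Real.pi) (-Real.pi) (JAf ω),
      AddCircle.liftIco_continuous (by exact (JAf_per ω).symm) (JAf_cont ω).continuousOn⟩ with hF
  -- coefficients
  have hcoefF : ∀ n : ℤ, fourierCoeff (⇑F) n = a n.natAbs := by
    intro n
    have h1 : fourierCoeff (⇑F) n = fourierCoeffOn jab_hab (JAf ω) n := by
      exact fourierCoeff_liftIco_eq (JAf ω) n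
    rw [h1, coef_eq, ha n.natAbs]
    rfl
  -- summability
  have hsum : Summable (fourierCoeff (⇑F)) := by
    apply Summable.of_norm_bounded_eventually
      (g := fun n : ℤ => (|ω| + ω^2) * (1 / (n:ℝ)^2))
    · exact (summable_one_div_int_pow.mpr one_lt_two).mul_left _
    · rw [Filter.eventually_cofinite]
      apply Set.Finite.subset (Set.finite_singleton (0:ℤ))
      intro n hn
      simp only [Set.mem_setOf_eq, not_le] at hn
      by_contra hn0
      simp only [Set.mem_singleton_iff] at hn0
      have hne : n ≠ 0 := hn0
      have e1 : fourierCoeff (⇑F) n = fourierCoeffOn jab_hab (JAf ω) n :=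
        fourierCoeff_liftIco_eq (JAf ω) n
      have e2 := coefOn_deriv (JAf ω) (JAf1 ω) (JAf_deriv ω) (JAf1_cont ω) (JAf_per ω) hne
      have e3 := coefOn_deriv (JAf1 ω) (JAf2 ω) (JAf1_deriv ω) (JAf2_cont ω) (JAf1_per ω) hne
      have hb := coefOn_bound (JAf2 ω) (|ω| + ω^2) (JAf2_norm ω) n
      have hnorm : ‖(1:ℂ)/(Complex.I * (n:ℂ))‖ = 1/|(n:ℝ)| := by
        rw [norm_div, norm_one, norm_mul, Complex.norm_I, one_mul,
          show ((n:ℤ):ℂ) = (((n:ℝ)):ℂ) by push_cast; ring, Complex.norm_real, Real.norm_eq_abs]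
      have habs : (0:ℝ) < |(n:ℝ)| := by
        simp only [abs_pos, ne_eq, Int.cast_eq_zero]; exact hne
      have key : ‖fourierCoeff (⇑F) n‖ ≤ (|ω| + ω^2) * (1/(n:ℝ)^2) := by
        rw [e1, e2, e3, norm_mul, norm_mul, hnorm]
        calc 1/|(n:ℝ)| * (1/|(n:ℝ)| * ‖fourierCoeffOn jab_hab (JAf2 ω) n‖)
            ≤ 1/|(n:ℝ)| * (1/|(n:ℝ)| * (|ω| + ω^2)) := by
              apply mul_le_mul_of_nonneg_left (mul_le_mul_of_nonneg_left hb (by positivity))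
                (by positivity)
          _ = (|ω| + ω^2) * (1/(n:ℝ)^2) := by
              rw [show ((n:ℝ))^2 = |(n:ℝ)|^2 from (_root_.sq_abs _).symm]
              simp only [one_div]
              ring
      exact absurd key (not_le.mpr hn)
  -- the evaluation point
  set φ := Real.arccos x with hφ
  have hφ0 : 0 ≤ φ := Real.arccos_nonneg x
  have hφπ : φ ≤ Real.pi := Real.arccos_le_pi x
  have hcosφ : Real.cos φ = x := Real.cos_arccos hx.1 hx.2
  have hFφ : F ((φ : ℝ) : AddCircle (2 * Real.pi)) = JAf ω φ := by
    rcases lt_or_eq_of_le hφπ with h | h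
    · show AddCircle.liftIco (2 * Real.pi) (-Real.pi) (JAf ω) ((φ : ℝ) : AddCircle (2 * Real.pi))
        = JAf ω φ
      exact AddCircle.liftIco_coe_apply ⟨by linarith [Real.pi_pos], by linarith⟩
    · have heq : ((φ : ℝ) : AddCircle (2 * Real.pi)) = ((-Real.pi : ℝ) : AddCircle (2 * Real.pi)) := by
        have h2 := AddCircle.coe_add_period (2 * Real.pi) (-Real.pi)
        rw [show -Real.pi + 2 * Real.pi = Real.pi by ring] at h2
        rw [h, h2]
      show AddCircle.liftIco (2 * Real.pi) (-Real.pi) (JAf ω) ((φ : ℝ) : AddCircle (2 * Real.pi))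
        = JAf ω φ
      rw [heq, AddCircle.liftIco_coe_apply ⟨le_refl _, by linarith [Real.pi_pos]⟩, h]
      simp [JAf, Real.cos_neg]
  have hfourφ : ∀ i : ℤ, (fourier i ((φ : ℝ) : AddCircle (2 * Real.pi)) : ℂ)
      = Complex.exp (Complex.I * (i : ℂ) * (φ : ℂ)) := by
    intro i
    rw [fourier_coe_apply]
    congr 1
    push_cast
    rw [div_eq_iff (by
      exact mul_ne_zero two_ne_zero (Complex.ofReal_ne_zero.mpr Real.pi_ne_zero))]
    ring
  -- pointwise convergence of the Fourier series
  have hs := has_pointwise_sum_fourier_series_of_summable hsum ((φ : ℝ) : AddCircle (2 * Real.pi))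
  have hs2 : HasSum (fun i : ℤ => a i.natAbs * Complex.exp (Complex.I * (i : ℂ) * (φ : ℂ)))
      (JAf ω φ) := by
    have hfun : (fun i : ℤ => fourierCoeff (⇑F) i • fourier i ((φ : ℝ) : AddCircle (2 * Real.pi)))
        = fun i : ℤ => a i.natAbs * Complex.exp (Complex.I * (i : ℂ) * (φ : ℂ)) := by
      funext i
      rw [smul_eq_mul, hcoefF i, hfourφ i]
    rw [hfun, hFφ] at hs
    exact hs
  -- fold into a ℕ-indexed sum
  have hg : HasSum (fun n : ℕ => a n * (2 * ((Real.cos (n * φ) : ℝ) : ℂ)))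
      (JAf ω φ + a 0) := by
    have h3 := hs2.nat_add_neg
    convert h3 using 1
    · funext n
      simp only [Int.natAbs_neg, Int.natAbs_natCast]
      rw [← mul_add]
      congr 1
      have e1 : Complex.I * (((n : ℤ) : ℂ)) * (φ : ℂ)
          = Complex.I * (((n : ℝ) * φ : ℝ) : ℂ) := by push_cast; ring
      have e2 : Complex.I * ((-(n : ℤ) : ℤ) : ℂ) * (φ : ℂ)
          = -(Complex.I * (((n : ℝ) * φ : ℝ) : ℂ)) := by push_cast; ring
      rw [e1, e2, exp_I_add_neg, ← Complex.ofReal_cos]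
    · simp
  -- pass to partial sums
  have ht := (hg.tendsto_sum_nat.comp (tendsto_add_atTop_nat 1)).sub_const (a 0)
  have hlim : JAf ω φ + a 0 - a 0 = Complex.exp (Complex.I * (ω : ℂ) * (x : ℂ)) := by
    rw [add_sub_cancel_right, JAf, ← hcosφ]
  rw [hlim] at ht
  have ht' : Filter.Tendsto
      (fun m : ℕ => (∑ k ∈ Finset.range (m + 1), a k * (2 * ((Real.cos (k * φ) : ℝ) : ℂ))) - a 0)
      Filter.atTop (nhds (Complex.exp (Complex.I * (ω : ℂ) * (x : ℂ)))) := ht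
  apply ht'.congr
  intro m
  have hT : ∀ k : ℕ, (((Polynomial.Chebyshev.T ℝ (k : ℤ)).eval x : ℝ) : ℂ)
      = ((Real.cos (k * φ) : ℝ) : ℂ) := by
    intro k
    congr 1
    rw [← hcosφ, Polynomial.Chebyshev.T_real_cos]
    norm_cast
  rw [Finset.range_eq_Ico, Finset.sum_eq_sum_Ico_succ_bot (Nat.succ_pos m), Nat.succ_eq_add_one, Finset.Ico_add_one_right_eq_Icc]
  simp only [hT, Nat.cast_zero, zero_mul, Real.cos_zero, Complex.ofReal_one, mul_one]
  rw [Finset.mul_sum]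
  have hsums : ∑ k ∈ Finset.Icc 1 m, a k * (2 * ((Real.cos (k * φ) : ℝ) : ℂ))
      = ∑ k ∈ Finset.Icc 1 m, 2 * (a k * ((Real.cos (k * φ) : ℝ) : ℂ)) := by
    apply Finset.sum_congr rfl
    intro k _
    ring
  rw [hsums]
  ring
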